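/- Let h>0 and 0<s<1/2. There exist positive constants c_s, C_s and d_s≤D_s, depending only on s, such that for every m∈ℤ∖{0}: d_s·h^{2s}/|m|^{1−2s} ≤ K_{-s}^h(m) ≤ D_s·h^{2s}/|m|^{1−2s}, and |K_{-s}^h(m) − c_s·h^{2s}/|m|^{1−2s}| ≤ C_s·h^{2s}/|m|^{2−2s}. -/

import Mathlib

/-- The kernel of the fractional discrete integral (negative power) on the mesh of size `h`:
`K_{-s}^h(m) = (4^{-s} Γ(1/2-s)/(√π Γ(s))) · h^{2s} Γ(|m|+s)/Γ(|m|+1-s)`. -/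
noncomputable def Knsh (h s : ℝ) (m : ℤ) : ℝ :=
  ((4 : ℝ) ^ (-s) * Real.Gamma (1/2 - s) / (Real.sqrt Real.pi * Real.Gamma s)) *
    (h ^ (2 * s) * Real.Gamma (|(m : ℝ)| + s) / Real.Gamma (|(m : ℝ)| + 1 - s))

open Real

/-- Bernoulli: for `t ≥ 1`, `0 ≤ q ≤ 1`: `t ^ q ≤ 1 + q * (t - 1)`. -/
lemma bern_aux {t q : ℝ} (ht : 1 ≤ t) (hq0 : 0 ≤ q) (hq1 : q ≤ 1) :
    t ^ q ≤ 1 + q * (t - 1) := by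
  have := rpow_one_add_le_one_add_mul_self (s := t - 1) (by linarith) hq0 hq1
  simpa using this

lemma rpow_shift {a b p : ℝ} (ha : 0 < a) (hb : 0 < b) : a ^ p = b ^ p * (a / b) ^ p := by
  rw [← Real.mul_rpow hb.le (by positivity), mul_div_cancel₀ _ (ne_of_gt hb)]

/-- Gautschi-type upper bound from log-convexity. -/
lemma gamma_ratio_upper {s : ℝ} (hs0 : 0 < s) (hs1 : s < 1/2) {n : ℝ} (hn : 1 ≤ n) :
    Real.Gamma (n + s) ≤ Real.Gamma (n + 1 - s) * (n - s) ^ (2*s - 1) := by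
  have hns : 0 < n - s := by linarith
  have hG2 : 0 < Real.Gamma (n + 1 - s) := Real.Gamma_pos_of_pos (by linarith)
  have h1 : Real.Gamma ((1 - 2*s) * (n - s) + (2*s) * (n + 1 - s)) ≤
      Real.Gamma (n - s) ^ (1 - 2*s) * Real.Gamma (n + 1 - s) ^ (2*s) :=
    Real.Gamma_mul_add_mul_le_rpow_Gamma_mul_rpow_Gamma hns (by linarith) (by linarith)
      (by linarith) (by ring)
  have h2 : (1 - 2*s) * (n - s) + (2*s) * (n + 1 - s) = n + s := by ring
  rw [h2] at h1
  have h3 : Real.Gamma (n - s) = Real.Gamma (n + 1 - s) / (n - s) := by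
    have : Real.Gamma ((n - s) + 1) = (n - s) * Real.Gamma (n - s) :=
      Real.Gamma_add_one (ne_of_gt hns)
    rw [show n + 1 - s = (n - s) + 1 by ring, this]
    field_simp
  rw [h3, Real.div_rpow hG2.le hns.le, div_mul_eq_mul_div, ← Real.rpow_add hG2,
    show 1 - 2*s + 2*s = (1:ℝ) by ring, Real.rpow_one] at h1
  have h4 : Real.Gamma (n + 1 - s) / (n - s) ^ (1 - 2*s)
      = Real.Gamma (n + 1 - s) * (n - s) ^ (2*s - 1) := by
    rw [show (2*s - 1) = -(1 - 2*s) by ring, Real.rpow_neg hns.le, div_eq_mul_inv]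
  rw [h4] at h1
  exact h1

/-- Gautschi-type lower bound from log-convexity. -/
lemma gamma_ratio_lower {s : ℝ} (hs0 : 0 < s) (hs1 : s < 1/2) {n : ℝ} (hn : 1 ≤ n) :
    Real.Gamma (n + 1 - s) ≤ Real.Gamma (n + s) * (n + s) ^ (1 - 2*s) := by
  have hps : 0 < n + s := by linarith
  have hG1 : 0 < Real.Gamma (n + s) := Real.Gamma_pos_of_pos hps
  have h1 : Real.Gamma ((2*s) * (n + s) + (1 - 2*s) * (n + 1 + s)) ≤
      Real.Gamma (n + s) ^ (2*s) * Real.Gamma (n + 1 + s) ^ (1 - 2*s) :=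
    Real.Gamma_mul_add_mul_le_rpow_Gamma_mul_rpow_Gamma hps (by linarith) (by linarith)
      (by linarith) (by ring)
  have h2 : (2*s) * (n + s) + (1 - 2*s) * (n + 1 + s) = n + 1 - s := by ring
  rw [h2] at h1
  have h3 : Real.Gamma (n + 1 + s) = (n + s) * Real.Gamma (n + s) := by
    rw [show n + 1 + s = (n + s) + 1 by ring, Real.Gamma_add_one (ne_of_gt hps)]
  rw [h3, Real.mul_rpow hps.le hG1.le, ← mul_assoc, mul_comm (Real.Gamma (n+s) ^ (2*s)),
    mul_assoc, ← Real.rpow_add hG1, show 2*s + (1 - 2*s) = (1:ℝ) by ring, Real.rpow_one,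
    mul_comm ((n+s) ^ (1-2*s))] at h1
  exact h1

set_option maxHeartbeats 2000000 in
theorem fracInt_kernel_estimates (s : ℝ) (hs0 : 0 < s) (hs1 : s < 1/2) :
    ∃ c C d D : ℝ, 0 < c ∧ 0 < C ∧ 0 < d ∧ d ≤ D ∧
      ∀ h : ℝ, 0 < h → ∀ m : ℤ, m ≠ 0 →
        d * h ^ (2 * s) / |(m : ℝ)| ^ (1 - 2 * s) ≤ Knsh h s m ∧
        Knsh h s m ≤ D * h ^ (2 * s) / |(m : ℝ)| ^ (1 - 2 * s) ∧
        |Knsh h s m - c * h ^ (2 * s) / |(m : ℝ)| ^ (1 - 2 * s)| ≤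
          C * h ^ (2 * s) / |(m : ℝ)| ^ (2 - 2 * s) := by
  set A : ℝ := (4 : ℝ) ^ (-s) * Real.Gamma (1/2 - s) / (Real.sqrt Real.pi * Real.Gamma s) with hA
  have hApos : 0 < A := by
    apply div_pos
    · exact mul_pos (Real.rpow_pos_of_pos (by norm_num) _)
        (Real.Gamma_pos_of_pos (by linarith))
    · exact mul_pos (Real.sqrt_pos.mpr Real.pi_pos) (Real.Gamma_pos_of_pos hs0)
  have hs' : s < 1 := by linarith
  have h1s : 0 < 1 - s := by linarith
  refine ⟨A, A * (s / (1 - s)), A / (1 + s), A / (1 - s), hApos,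
    mul_pos hApos (div_pos hs0 h1s), div_pos hApos (by linarith),
    by
      apply div_le_div_of_nonneg_left hApos.le h1s
      linarith, ?_⟩
  intro h hh m hm
  set n : ℝ := |(m : ℝ)| with hn
  have hn1 : 1 ≤ n := by
    rw [hn, ← Int.cast_abs]
    exact_mod_cast Int.one_le_abs hm
  have hn0 : 0 < n := lt_of_lt_of_le one_pos hn1
  have hns : 0 < n - s := by linarith
  have hps : 0 < n + s := by linarith
  have hG1 : 0 < Real.Gamma (n + s) := Real.Gamma_pos_of_pos hps
  have hG2 : 0 < Real.Gamma (n + 1 - s) := Real.Gamma_pos_of_pos (by linarith)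
  set R : ℝ := Real.Gamma (n + s) / Real.Gamma (n + 1 - s) with hR
  -- Gautschi bounds
  have hRup : R ≤ (n - s) ^ (2*s - 1) := by
    rw [hR, div_le_iff₀ hG2, mul_comm]
    exact gamma_ratio_upper hs0 hs1 hn1
  have hRlow : (n + s) ^ (2*s - 1) ≤ R := by
    rw [hR, le_div_iff₀ hG2]
    have := gamma_ratio_lower hs0 hs1 (s := s) hn1
    calc (n + s) ^ (2*s - 1) * Real.Gamma (n + 1 - s)
        ≤ (n + s) ^ (2*s - 1) * (Real.Gamma (n + s) * (n + s) ^ (1 - 2*s)) := by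
          apply mul_le_mul_of_nonneg_left this (by positivity)
      _ = Real.Gamma (n + s) * ((n + s) ^ (2*s - 1) * (n + s) ^ (1 - 2*s)) := by ring
      _ = Real.Gamma (n + s) := by
          rw [← Real.rpow_add hps, show 2*s - 1 + (1 - 2*s) = (0:ℝ) by ring, Real.rpow_zero,
            mul_one]
  -- elementary rpow estimates
  have hq0 : (0:ℝ) ≤ 1 - 2*s := by linarith
  have hq1 : 1 - 2*s ≤ 1 := by linarith
  -- upper: (n-s)^(2s-1) = n^(2s-1) * t^(1-2s) with t = n/(n-s) ≥ 1
  have ht1 : 1 ≤ n / (n - s) := (le_div_iff₀ hns).mpr (by linarith)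
  have hlower_shift : (n - s) ^ (2*s - 1) = n ^ (2*s - 1) * (n / (n - s)) ^ (1 - 2*s) := by
    rw [rpow_shift hns hn0 (p := 2*s - 1)]
    congr 1
    rw [show (2*s - 1) = -(1 - 2*s) by ring, Real.rpow_neg (by positivity),
      ← Real.inv_rpow (by positivity), inv_div]
  have ht1' : 1 ≤ (n + s) / n := (le_div_iff₀ hn0).mpr (by linarith)
  have hupper_shift : (n + s) ^ (2*s - 1) = n ^ (2*s - 1) * (((n + s) / n) ^ (1 - 2*s))⁻¹ := by
    rw [rpow_shift hps hn0 (p := 2*s - 1)]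
    congr 1
    rw [show (2*s - 1) = -(1 - 2*s) by ring, Real.rpow_neg (by positivity)]
  have hnp : 0 < n ^ (2*s - 1) := Real.rpow_pos_of_pos hn0 _
  have hnp2 : 0 < n ^ (2*s - 2) := Real.rpow_pos_of_pos hn0 _
  have hsub : n ^ (2*s - 2) = n ^ (2*s - 1) / n := by
    rw [show 2*s - 2 = (2*s - 1) - 1 by ring, Real.rpow_sub hn0, Real.rpow_one]
  -- E1 : (n-s)^(2s-1) ≤ (1/(1-s)) * n^(2s-1)
  have hE1 : (n - s) ^ (2*s - 1) ≤ (1 / (1 - s)) * n ^ (2*s - 1) := by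
    rw [hlower_shift]
    have h2 : (n / (n - s)) ^ (1 - 2*s) ≤ n / (n - s) := by
      calc (n / (n - s)) ^ (1 - 2*s) ≤ (n / (n - s)) ^ (1:ℝ) :=
            Real.rpow_le_rpow_of_exponent_le ht1 hq1
        _ = n / (n - s) := Real.rpow_one _
    have h3 : n / (n - s) ≤ 1 / (1 - s) := by
      rw [div_le_div_iff₀ hns h1s]
      nlinarith
    calc n ^ (2*s - 1) * (n / (n - s)) ^ (1 - 2*s) ≤ n ^ (2*s - 1) * (1 / (1 - s)) := by
          apply mul_le_mul_of_nonneg_left (h2.trans h3) hnp.le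
      _ = (1 / (1 - s)) * n ^ (2*s - 1) := by ring
  -- E3 : (n-s)^(2s-1) ≤ n^(2s-1) + (s/(1-s)) * n^(2s-2)
  have hE3 : (n - s) ^ (2*s - 1) ≤ n ^ (2*s - 1) + (s / (1 - s)) * n ^ (2*s - 2) := by
    rw [hlower_shift]
    have hb := bern_aux ht1 hq0 hq1
    have h4 : n / (n - s) - 1 = s / (n - s) := by field_simp; ring
    have h5 : s / (n - s) ≤ s / ((1 - s) * n) := by
      apply div_le_div_of_nonneg_left hs0.le (by positivity)
      nlinarith
    have h6 : (n / (n - s)) ^ (1 - 2*s) ≤ 1 + s / ((1 - s) * n) := by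
      calc (n / (n - s)) ^ (1 - 2*s) ≤ 1 + (1 - 2*s) * (n / (n - s) - 1) := hb
        _ ≤ 1 + (n / (n - s) - 1) := by nlinarith [sub_nonneg.mpr ht1]
        _ = 1 + s / (n - s) := by rw [h4]
        _ ≤ 1 + s / ((1 - s) * n) := by linarith
    calc n ^ (2*s - 1) * (n / (n - s)) ^ (1 - 2*s)
        ≤ n ^ (2*s - 1) * (1 + s / ((1 - s) * n)) :=
          mul_le_mul_of_nonneg_left h6 hnp.le
      _ = n ^ (2*s - 1) + (s / (1 - s)) * (n ^ (2*s - 1) / n) := by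
          field_simp
      _ = n ^ (2*s - 1) + (s / (1 - s)) * n ^ (2*s - 2) := by rw [hsub]
  -- E2 : (1/(1+s)) * n^(2s-1) ≤ (n+s)^(2s-1)
  have hE2 : (1 / (1 + s)) * n ^ (2*s - 1) ≤ (n + s) ^ (2*s - 1) := by
    rw [hupper_shift]
    have h2 : ((n + s) / n) ^ (1 - 2*s) ≤ 1 + s := by
      calc ((n + s) / n) ^ (1 - 2*s) ≤ ((n + s) / n) ^ (1:ℝ) :=
            Real.rpow_le_rpow_of_exponent_le ht1' hq1
        _ = (n + s) / n := Real.rpow_one _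
        _ ≤ 1 + s := by
            rw [div_le_iff₀ hn0]
            nlinarith
    have h3 : (1 + s)⁻¹ ≤ (((n + s) / n) ^ (1 - 2*s))⁻¹ :=
      inv_anti₀ (by positivity) h2
    calc (1 / (1 + s)) * n ^ (2*s - 1) = n ^ (2*s - 1) * (1 + s)⁻¹ := by ring
      _ ≤ n ^ (2*s - 1) * (((n + s) / n) ^ (1 - 2*s))⁻¹ :=
          mul_le_mul_of_nonneg_left h3 hnp.le
  -- E4 : n^(2s-1) - s * n^(2s-2) ≤ (n+s)^(2s-1)
  have hE4 : n ^ (2*s - 1) - s * n ^ (2*s - 2) ≤ (n + s) ^ (2*s - 1) := by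
    rw [hupper_shift]
    have hb := bern_aux ht1' hq0 hq1
    have h4 : (n + s) / n - 1 = s / n := by field_simp; ring
    have hy : 0 ≤ (1 - 2*s) * ((n + s) / n - 1) := by
      apply mul_nonneg hq0
      linarith [ht1']
    have h5 : 1 - (1 - 2*s) * ((n + s) / n - 1) ≤ (((n + s) / n) ^ (1 - 2*s))⁻¹ := by
      have hpos : 0 < ((n + s) / n) ^ (1 - 2*s) := Real.rpow_pos_of_pos (by positivity) _
      rcases le_or_gt (1 - (1 - 2*s) * ((n + s) / n - 1)) 0 with hc | hc
      · exact hc.trans (inv_pos.mpr hpos).le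
      · have h7 : ((n + s) / n) ^ (1 - 2*s) ≤ (1 - (1 - 2*s) * ((n + s) / n - 1))⁻¹ := by
          apply hb.trans
          rw [← one_div, le_div_iff₀ hc]
          nlinarith
        calc 1 - (1 - 2*s) * ((n + s) / n - 1)
            = ((1 - (1 - 2*s) * ((n + s) / n - 1))⁻¹)⁻¹ := (inv_inv _).symm
          _ ≤ (((n + s) / n) ^ (1 - 2*s))⁻¹ := by
              apply inv_anti₀ hpos h7
    have h6 : 1 - s / n ≤ (((n + s) / n) ^ (1 - 2*s))⁻¹ := by
      refine le_trans ?_ h5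
      rw [h4] at *
      nlinarith [div_nonneg hs0.le hn0.le]
    calc n ^ (2*s - 1) - s * n ^ (2*s - 2)
        = n ^ (2*s - 1) * (1 - s / n) := by
          rw [hsub]; field_simp
      _ ≤ n ^ (2*s - 1) * (((n + s) / n) ^ (1 - 2*s))⁻¹ :=
          mul_le_mul_of_nonneg_left h6 hnp.le
  -- error bound for the ratio
  have hss : s ≤ s / (1 - s) := by
    rw [le_div_iff₀ h1s]
    nlinarith
  have hErr : |R - n ^ (2*s - 1)| ≤ (s / (1 - s)) * n ^ (2*s - 2) := by
    rw [abs_le]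
    constructor
    · have := hRlow
      nlinarith [mul_le_mul_of_nonneg_right hss hnp2.le]
    · nlinarith [hRup, hE3]
  -- assemble
  have hH : 0 < h ^ (2 * s) := Real.rpow_pos_of_pos hh _
  have hKnsh : Knsh h s m = A * h ^ (2 * s) * R := by
    rw [Knsh, hR, ← hA, ← hn]
    ring
  have hrw1 : ∀ x : ℝ, x / n ^ (1 - 2 * s) = x * n ^ (2*s - 1) := by
    intro x
    rw [show (1 - 2 * s) = -(2*s - 1) by ring, Real.rpow_neg hn0.le, div_eq_mul_inv, inv_inv]
  have hrw2 : ∀ x : ℝ, x / n ^ (2 - 2 * s) = x * n ^ (2*s - 2) := by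
    intro x
    rw [show (2 - 2 * s) = -(2*s - 2) by ring, Real.rpow_neg hn0.le, div_eq_mul_inv, inv_inv]
  rw [hKnsh, hrw1, hrw1, hrw1, hrw2]
  have hAH : 0 < A * h ^ (2 * s) := mul_pos hApos hH
  refine ⟨?_, ?_, ?_⟩
  · have := mul_le_mul_of_nonneg_left ((hE2.trans hRlow)) hAH.le
    calc A / (1 + s) * h ^ (2 * s) * n ^ (2*s - 1)
        = A * h ^ (2 * s) * (1 / (1 + s) * n ^ (2*s - 1)) := by ring
      _ ≤ A * h ^ (2 * s) * R := this
  · have := mul_le_mul_of_nonneg_left (hRup.trans hE1) hAH.le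
    calc A * h ^ (2 * s) * R ≤ A * h ^ (2 * s) * (1 / (1 - s) * n ^ (2*s - 1)) := this
      _ = A / (1 - s) * h ^ (2 * s) * n ^ (2*s - 1) := by ring
  · have h8 : A * h ^ (2 * s) * R - A * h ^ (2 * s) * n ^ (2*s - 1)
        = A * h ^ (2 * s) * (R - n ^ (2*s - 1)) := by ring
    rw [h8, abs_mul, abs_of_pos hAH]
    calc A * h ^ (2 * s) * |R - n ^ (2*s - 1)|
        ≤ A * h ^ (2 * s) * ((s / (1 - s)) * n ^ (2*s - 2)) :=
          mul_le_mul_of_nonneg_left hErr hAH.le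
      _ = A * (s / (1 - s)) * h ^ (2 * s) * n ^ (2*s - 2) := by ring
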